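/- Comparison principle: Let G be a finite weighted graph, T > 0, a ≥ 0 on V, p > 1, and let u, v: V × [0,T] → ℝ be C¹ in time with ∂_t u - Δu + au - |u|^{p-1}u ≥ ∂_t v - Δv + av - |v|^{p-1}v on V × [0,T] and u(x,0) ≥ v(x,0) for all x ∈ V. Then u(x,t) ≥ v(x,t) for all (x,t) ∈ V × [0,T]. -/

import Mathlib

open Finset Real

noncomputable section

/-- A finite weighted graph: positive vertex measure `mu`, symmetric nonnegative
edge weights `w` (an edge `x ∼ y` is present iff `0 < w x y`). -/
structure WGraph (V : Type*) [Fintype V] where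
  mu : V → ℝ
  w : V → V → ℝ
  mu_pos : ∀ x, 0 < mu x
  w_symm : ∀ x y, w x y = w y x
  w_nonneg : ∀ x y, 0 ≤ w x y

variable {V : Type*} [Fintype V]

/-- Integration on the graph: `∫_V f dμ = Σ_x μ(x) f(x)`. -/
def WGraph.integral (G : WGraph V) (f : V → ℝ) : ℝ := ∑ x, G.mu x * f x

/-- The μ-Laplacian: `Δu(x) = (1/μ(x)) Σ_y ω_{xy}(u(y)-u(x))`. -/
def WGraph.lap (G : WGraph V) (u : V → ℝ) (x : V) : ℝ :=
  (∑ y, G.w x y * (u y - u x)) / G.mu x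

/-- Discrete Dirichlet pairing `∫_V ∇u∇v dμ = (1/2)Σ_xΣ_y ω_{xy}(u(y)-u(x))(v(y)-v(x))`. -/
def WGraph.dirichlet (G : WGraph V) (u v : V → ℝ) : ℝ :=
  (1 / 2) * ∑ x, ∑ y, G.w x y * (u y - u x) * (v y - v x)

/-- Connectedness: any two vertices are joined by a finite chain of edges. -/
def WGraph.Connected (G : WGraph V) : Prop :=
  ∀ x y : V, Relation.ReflTransGen (fun a b => 0 < G.w a b) x y

/-- `‖u‖²_{1,a} = ∫_V (|∇u|² + a u²) dμ`. -/
def WGraph.norm1aSq (G : WGraph V) (a : V → ℝ) (u : V → ℝ) : ℝ :=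
  G.dirichlet u u + G.integral (fun x => a x * u x ^ 2)

/-- The first eigenvalue `λ_a` of `-Δ + a`, as the infimum of the Rayleigh quotient. -/
noncomputable def rayleighInf (G : WGraph V) (a : V → ℝ) : ℝ :=
  sInf {r : ℝ | ∃ u : V → ℝ, u ≠ 0 ∧
    r = G.norm1aSq a u / G.integral (fun x => u x ^ 2)}

/-- The energy functional `J(u) = (1/2)∫(|∇u|²+au²)dμ - (1/(p+1))∫|u|^{p+1}dμ`. -/
noncomputable def WGraph.J (G : WGraph V) (a : V → ℝ) (p : ℝ) (u : V → ℝ) : ℝ :=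
  (1/2) * G.norm1aSq a u - (1/(p+1)) * G.integral (fun x => |u x| ^ (p+1))

/-- The Nehari functional `N(u) = ∫(|∇u|²+au²)dμ - ∫|u|^{p+1}dμ`. -/
noncomputable def WGraph.nehari (G : WGraph V) (a : V → ℝ) (p : ℝ) (u : V → ℝ) : ℝ :=
  G.norm1aSq a u - G.integral (fun x => |u x| ^ (p+1))

/-- The Sobolev-type constant `Λ`. -/
noncomputable def sobolevInf (G : WGraph V) (a : V → ℝ) (p : ℝ) : ℝ :=
  sInf {r : ℝ | ∃ u : V → ℝ, u ≠ 0 ∧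
    r = G.norm1aSq a u / (G.integral (fun x => |u x| ^ (p+1))) ^ (2/(p+1))}

/-- The depth `r` of the potential well. -/
noncomputable def wellDepth (G : WGraph V) (a : V → ℝ) (p : ℝ) : ℝ :=
  sInf {r : ℝ | ∃ u : V → ℝ, u ≠ 0 ∧ G.nehari a p u = 0 ∧ r = G.J a p u}

section AuxComparison

theorem hasDerivAt_posSq (c : ℝ) : HasDerivAt (fun s : ℝ => (max s 0)^2) (2 * max c 0) c := by
  rcases lt_trichotomy c 0 with hc | rfl | hc
  · have h : (fun s : ℝ => (max s 0)^2) =ᶠ[nhds c] (fun _ => 0) := by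
      filter_upwards [eventually_lt_nhds hc] with s hs
      simp [max_eq_right hs.le]
    have h0 : HasDerivAt (fun _ : ℝ => (0:ℝ)) 0 c := hasDerivAt_const _ _
    simpa [max_eq_right hc.le] using h0.congr_of_eventuallyEq h
  · rw [hasDerivAt_iff_tendsto_slope]
    have key : Filter.Tendsto (slope (fun s : ℝ => (max s 0)^2) 0) (nhdsWithin 0 {0}ᶜ) (nhds 0) := by
      apply squeeze_zero_norm' (a := fun s : ℝ => |s|)
      · filter_upwards [self_mem_nhdsWithin] with s hs
        simp only [Set.mem_compl_iff, Set.mem_singleton_iff] at hs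
        rcases le_total s 0 with h | h
        · simp [slope, max_eq_right h, abs_nonneg]
        · have e : s⁻¹ * (s * s) = s := by field_simp
          simp [slope, max_eq_left h, sq, smul_eq_mul, e]
      · exact (continuous_abs.tendsto' 0 0 (by simp)).mono_left nhdsWithin_le_nhds
    simpa using key
  · have h : (fun s : ℝ => (max s 0)^2) =ᶠ[nhds c] (fun s => s^2) := by
      filter_upwards [eventually_gt_nhds hc] with s hs
      simp [max_eq_left hs.le]
    have h2 : HasDerivAt (fun s : ℝ => s^2) (2*c) c := by
      simpa using (hasDerivAt_pow 2 c)
    simpa [max_eq_left hc.le] using h2.congr_of_eventuallyEq h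

theorem hasDerivAt_absPow (q : ℝ) (hq : 0 < q) (c : ℝ) :
    HasDerivAt (fun s : ℝ => |s| ^ q * s) ((q+1) * |c| ^ q) c := by
  rcases lt_trichotomy c 0 with hc | rfl | hc
  · have h : (fun s : ℝ => |s| ^ q * s) =ᶠ[nhds c] (fun s => (-s) ^ q * s) := by
      filter_upwards [eventually_lt_nhds hc] with s hs
      rw [abs_of_neg hs]
    have hneg : HasDerivAt (fun s : ℝ => (-s) ^ q) (q * (-c) ^ (q-1) * (-1)) c := by
      have h1 : HasDerivAt (fun y : ℝ => y ^ q) (q * (-c) ^ (q-1)) (-c) :=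
        Real.hasDerivAt_rpow_const (Or.inl (by linarith))
      exact h1.comp c (hasDerivAt_neg c)
    have final := (hneg.mul (hasDerivAt_id c)).congr_of_eventuallyEq h
    convert final using 1
    · rfl
    · rfl
    rw [abs_of_neg hc]
    have e2 : q * (-c) ^ (q-1) * (-1) * id c = q * ((-c) ^ (q-1) * (-c)) := by simp; ring
    rw [e2, ← Real.rpow_add_one (by linarith : (-c) ≠ 0)]
    ring_nf
  · rw [hasDerivAt_iff_tendsto_slope]
    have key : Filter.Tendsto (slope (fun s : ℝ => |s| ^ q * s) 0) (nhdsWithin 0 {0}ᶜ) (nhds 0) := by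
      apply squeeze_zero_norm' (a := fun s : ℝ => |s| ^ q)
      · filter_upwards [self_mem_nhdsWithin] with s hs
        simp only [Set.mem_compl_iff, Set.mem_singleton_iff] at hs
        have e : s⁻¹ * (|s| ^ q * s) = |s| ^ q := by field_simp
        simp [slope, smul_eq_mul, e, abs_of_nonneg (rpow_nonneg (abs_nonneg s) q)]
      · have hca : Filter.Tendsto (fun s : ℝ => |s| ^ q) (nhds 0) (nhds 0) := by
          have hc : ContinuousAt (fun s : ℝ => |s| ^ q) 0 :=
            (continuous_abs.continuousAt).rpow_const (Or.inr hq.le)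
          simpa [Real.zero_rpow hq.ne'] using hc.tendsto
        exact hca.mono_left nhdsWithin_le_nhds
    simpa [Real.zero_rpow hq.ne'] using key
  · have h : (fun s : ℝ => |s| ^ q * s) =ᶠ[nhds c] (fun s => s ^ q * s) := by
      filter_upwards [eventually_gt_nhds hc] with s hs
      rw [abs_of_pos hs]
    have h1 : HasDerivAt (fun y : ℝ => y ^ q) (q * c ^ (q-1)) c :=
      Real.hasDerivAt_rpow_const (Or.inl hc.ne')
    have final := (h1.mul (hasDerivAt_id c)).congr_of_eventuallyEq h
    convert final using 1
    · rfl
    · rfl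
    rw [abs_of_pos hc]
    have e2 : q * c ^ (q-1) * id c = q * (c ^ (q-1) * c) := by simp; ring
    rw [e2, ← Real.rpow_add_one hc.ne']
    ring_nf

theorem absPow_diff_le (q : ℝ) (hq : 0 < q) {a b : ℝ} (hab : a < b) :
    |b| ^ q * b - |a| ^ q * a ≤ (q+1) * (|a| ^ q + |b| ^ q) * (b - a) := by
  obtain ⟨c, hc, hceq⟩ := exists_hasDerivAt_eq_slope (fun s : ℝ => |s| ^ q * s)
    (fun s => (q+1) * |s| ^ q) hab
    (fun s _ => (hasDerivAt_absPow q hq s).continuousAt.continuousWithinAt)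
    (fun s _ => hasDerivAt_absPow q hq s)
  have hba : 0 < b - a := sub_pos.2 hab
  have hslope : |b| ^ q * b - |a| ^ q * a = (q+1) * |c| ^ q * (b - a) := by
    field_simp at hceq
    linarith [hceq]
  rw [hslope]
  have hcb : |c| ≤ max |a| |b| := by
    rw [abs_le]
    constructor
    · calc -(max |a| |b|) ≤ -|a| := by simp
        _ ≤ a := neg_abs_le a
        _ ≤ c := hc.1.le
    · calc c ≤ b := hc.2.le
        _ ≤ |b| := le_abs_self b
        _ ≤ max |a| |b| := le_max_right _ _
  have hcq : |c| ^ q ≤ |a| ^ q + |b| ^ q := by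
    have h1 : |c| ^ q ≤ (max |a| |b|) ^ q :=
      Real.rpow_le_rpow (abs_nonneg c) hcb hq.le
    rcases max_cases |a| |b| with ⟨he, _⟩ | ⟨he, _⟩ <;> rw [he] at h1 <;>
      [linarith [Real.rpow_nonneg (abs_nonneg b) q];
       linarith [Real.rpow_nonneg (abs_nonneg a) q]]
  have : (q+1) * |c| ^ q ≤ (q+1) * (|a| ^ q + |b| ^ q) :=
    mul_le_mul_of_nonneg_left hcq (by linarith)
  exact mul_le_mul_of_nonneg_right this hba.le



theorem sum_posPart_lap_nonpos (G : WGraph V) (f : V → ℝ) :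
    ∑ x, G.mu x * (max (f x) 0 * G.lap f x) ≤ 0 := by
  have hrw : ∀ x, G.mu x * (max (f x) 0 * G.lap f x)
      = ∑ y, G.w x y * max (f x) 0 * (f y - f x) := by
    intro x
    rw [WGraph.lap]
    rw [mul_comm (G.mu x), mul_assoc, div_mul_cancel₀ _ (G.mu_pos x).ne', Finset.mul_sum]
    exact Finset.sum_congr rfl fun y _ => by ring
  rw [Finset.sum_congr rfl fun x _ => hrw x]
  set S := ∑ x, ∑ y, G.w x y * max (f x) 0 * (f y - f x) with hS
  have hswap : S = ∑ x, ∑ y, G.w x y * max (f y) 0 * (f x - f y) := by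
    rw [hS, Finset.sum_comm]
    exact Finset.sum_congr rfl fun x _ => Finset.sum_congr rfl fun y _ => by
      rw [G.w_symm y x]
  have h2 : S + S = ∑ x, ∑ y,
      (G.w x y * max (f x) 0 * (f y - f x) + G.w x y * max (f y) 0 * (f x - f y)) := by
    nth_rewrite 2 [hswap]
    rw [hS, ← Finset.sum_add_distrib]
    exact Finset.sum_congr rfl fun x _ => (Finset.sum_add_distrib).symm
  have hle : S + S ≤ 0 := by
    rw [h2]
    apply Finset.sum_nonpos; intro x _
    apply Finset.sum_nonpos; intro y _
    have hw := G.w_nonneg x y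
    have hid : G.w x y * max (f x) 0 * (f y - f x) + G.w x y * max (f y) 0 * (f x - f y)
        = -(G.w x y * ((max (f y) 0) - (max (f x) 0)) * (f y - f x)) := by ring
    rw [hid, neg_nonpos]
    rcases le_total (f x) (f y) with h | h
    · have hm : max (f x) 0 ≤ max (f y) 0 := max_le_max h le_rfl
      exact mul_nonneg (mul_nonneg hw (by linarith)) (by linarith)
    · have hm : max (f y) 0 ≤ max (f x) 0 := max_le_max h le_rfl
      have : G.w x y * ((max (f y) 0) - (max (f x) 0)) * (f y - f x)
          = G.w x y * (((max (f x) 0) - (max (f y) 0)) * (f x - f y)) := by ring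
      rw [this]
      exact mul_nonneg hw (mul_nonneg (by linarith) (by linarith))
  linarith


end AuxComparison

/-- comparison principle for `∂_t u - Δu + au - |u|^{p-1}u` on `V × [0,T]`. -/
theorem comparison_principle {V : Type*} [Fintype V]
    (G : WGraph V) (T : ℝ) (hT : 0 < T)
    (a : V → ℝ) (ha : ∀ x, 0 ≤ a x) (p : ℝ) (hp : 1 < p)
    (u v u' v' : V → ℝ → ℝ)
    (hu : ∀ x, ∀ t ∈ Set.Icc (0:ℝ) T, HasDerivWithinAt (u x) (u' x t) (Set.Icc 0 T) t)
    (hv : ∀ x, ∀ t ∈ Set.Icc (0:ℝ) T, HasDerivWithinAt (v x) (v' x t) (Set.Icc 0 T) t)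
    (hineq : ∀ x, ∀ t ∈ Set.Icc (0:ℝ) T,
      v' x t - G.lap (fun y => v y t) x + a x * v x t - |v x t| ^ (p - 1) * v x t ≤
      u' x t - G.lap (fun y => u y t) x + a x * u x t - |u x t| ^ (p - 1) * u x t)
    (h0 : ∀ x, v x 0 ≤ u x 0) :
    ∀ x, ∀ t ∈ Set.Icc (0:ℝ) T, v x t ≤ u x t := by
  set q := p - 1 with hq
  have hq0 : 0 < q := by simp [hq]; linarith
  -- continuity of u, v in time
  have hcu : ∀ x, ContinuousOn (u x) (Set.Icc 0 T) :=
    fun x t ht => (hu x t ht).continuousWithinAt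
  have hcv : ∀ x, ContinuousOn (v x) (Set.Icc 0 T) :=
    fun x t ht => (hv x t ht).continuousWithinAt
  -- global bound K for the Lipschitz constant of the nonlinearity
  set F : ℝ → ℝ := fun t => ∑ x, p * (|u x t| ^ q + |v x t| ^ q) with hF
  have hFcont : ContinuousOn F (Set.Icc 0 T) := by
    apply continuousOn_finset_sum
    intro x _
    exact continuousOn_const.mul (((hcu x).abs.rpow_const (fun t _ => Or.inr hq0.le)).add
        ((hcv x).abs.rpow_const (fun t _ => Or.inr hq0.le)))
  obtain ⟨t₀, ht₀, hKmax'⟩ := isCompact_Icc.exists_isMaxOn (Set.nonempty_Icc.2 hT.le) hFcont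
  have hKmax : ∀ t ∈ Set.Icc (0:ℝ) T, F t ≤ F t₀ := fun t ht => hKmax' ht
  set K := F t₀ with hK
  have hterm_nonneg : ∀ (x : V) (t : ℝ), 0 ≤ p * (|u x t| ^ q + |v x t| ^ q) := by
    intro x t
    have := Real.rpow_nonneg (abs_nonneg (u x t)) q
    have := Real.rpow_nonneg (abs_nonneg (v x t)) q
    nlinarith
  have hKb : ∀ x, ∀ t ∈ Set.Icc (0:ℝ) T, p * (|u x t| ^ q + |v x t| ^ q) ≤ K := by
    intro x t ht
    calc p * (|u x t| ^ q + |v x t| ^ q)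
        ≤ F t := Finset.single_le_sum (fun y _ => hterm_nonneg y t) (Finset.mem_univ x)
      _ ≤ K := hKmax t ht
  -- the energy function z
  set w : V → ℝ → ℝ := fun x t => v x t - u x t with hwdef
  set w' : V → ℝ → ℝ := fun x t => v' x t - u' x t with hw'def
  set z : ℝ → ℝ := fun t => ∑ x, G.mu x * (max (w x t) 0)^2 with hz
  set z' : ℝ → ℝ := fun t => ∑ x, G.mu x * (2 * max (w x t) 0 * w' x t) with hz'
  have hwderiv : ∀ x, ∀ t ∈ Set.Icc (0:ℝ) T,
      HasDerivWithinAt (w x) (w' x t) (Set.Icc 0 T) t :=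
    fun x t ht => (hv x t ht).sub (hu x t ht)
  have hzderiv : ∀ t ∈ Set.Icc (0:ℝ) T, HasDerivWithinAt z (z' t) (Set.Icc 0 T) t := by
    intro t ht
    apply HasDerivWithinAt.fun_sum
    intro x _
    have h1 : HasDerivWithinAt (fun s => (max (w x s) 0)^2)
        (2 * max (w x t) 0 * w' x t) (Set.Icc 0 T) t := by
      have := (hasDerivAt_posSq (w x t)).comp_hasDerivWithinAt t (hwderiv x t ht)
      exact this
    simpa [mul_assoc] using h1.const_mul (G.mu x)
  have hznn : ∀ t, 0 ≤ z t := by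
    intro t
    apply Finset.sum_nonneg
    intro x _
    exact mul_nonneg (G.mu_pos x).le (sq_nonneg _)
  have hz0 : z 0 = 0 := by
    apply Finset.sum_eq_zero
    intro x _
    have : max (w x 0) 0 = 0 := max_eq_right (by simp [hwdef]; linarith [h0 x])
    simp [this]
  -- the differential inequality z' ≤ 2K z
  have hdiffineq : ∀ t ∈ Set.Icc (0:ℝ) T, z' t ≤ (2 * K) * z t := by
    intro t ht
    have hptwise : ∀ x, w' x t ≤ G.lap (fun y => w y t) x - a x * w x t
        + (|v x t| ^ q * v x t - |u x t| ^ q * u x t) := by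
      intro x
      have hin := hineq x t ht
      have hlap : G.lap (fun y => v y t) x - G.lap (fun y => u y t) x
          = G.lap (fun y => w y t) x := by
        simp only [WGraph.lap, hwdef, div_sub_div_same]
        congr 1
        rw [← Finset.sum_sub_distrib]
        exact Finset.sum_congr rfl fun y _ => by ring
      simp only [hwdef, hw'def] at hlap ⊢
      linarith
    have hmw : ∀ x, max (w x t) 0 * w x t = (max (w x t) 0)^2 := by
      intro x
      rcases le_total (w x t) 0 with h | h
      · simp [max_eq_right h]
      · rw [max_eq_left h]; ring
    have hterm : ∀ x ∈ Finset.univ (α := V), G.mu x * (2 * max (w x t) 0 * w' x t)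
        ≤ 2 * (G.mu x * (max (w x t) 0 * G.lap (fun y => w y t) x))
          + (2 * K) * (G.mu x * (max (w x t) 0)^2) := by
      intro x _
      have hmu := (G.mu_pos x).le
      have hm := le_max_right (w x t) 0
      have hg : max (w x t) 0 * (|v x t| ^ q * v x t - |u x t| ^ q * u x t)
          ≤ K * (max (w x t) 0)^2 := by
        rcases le_or_gt (w x t) 0 with h | h
        · simp [max_eq_right h]
        · have huv : u x t < v x t := by simp only [hwdef] at h; linarith
          have hmvt := absPow_diff_le q hq0 huv
          have hK := hKb x t ht
          have hqp : q + 1 = p := by rw [hq]; ring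
          rw [hqp] at hmvt
          have h1 : |v x t| ^ q * v x t - |u x t| ^ q * u x t ≤ K * (w x t) := by
            calc |v x t| ^ q * v x t - |u x t| ^ q * u x t
                ≤ p * (|u x t| ^ q + |v x t| ^ q) * (v x t - u x t) := hmvt
              _ ≤ K * (w x t) := by
                  simp only [hwdef]
                  have : v x t - u x t > 0 := by linarith
                  nlinarith
          rw [max_eq_left h.le]
          nlinarith
      have haw : max (w x t) 0 * (- (a x * w x t)) ≤ 0 := by
        have : max (w x t) 0 * (a x * w x t) = a x * (max (w x t) 0)^2 := by
          rw [← hmw x]; ring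
        nlinarith [ha x, sq_nonneg (max (w x t) 0), this]
      have hstep : 2 * max (w x t) 0 * w' x t
          ≤ 2 * (max (w x t) 0 * G.lap (fun y => w y t) x) + (2 * K) * (max (w x t) 0)^2 := by
        have h1 := hptwise x
        have hmnn : (0:ℝ) ≤ max (w x t) 0 := le_max_right _ _
        nlinarith [mul_le_mul_of_nonneg_left h1 hmnn]
      calc G.mu x * (2 * max (w x t) 0 * w' x t)
          ≤ G.mu x * (2 * (max (w x t) 0 * G.lap (fun y => w y t) x)
            + (2 * K) * (max (w x t) 0)^2) := mul_le_mul_of_nonneg_left hstep hmu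
        _ = 2 * (G.mu x * (max (w x t) 0 * G.lap (fun y => w y t) x))
            + (2 * K) * (G.mu x * (max (w x t) 0)^2) := by ring
    calc z' t ≤ ∑ x, (2 * (G.mu x * (max (w x t) 0 * G.lap (fun y => w y t) x))
          + (2 * K) * (G.mu x * (max (w x t) 0)^2)) := Finset.sum_le_sum hterm
      _ = 2 * (∑ x, G.mu x * (max (w x t) 0 * G.lap (fun y => w y t) x))
          + (2 * K) * z t := by
          rw [Finset.sum_add_distrib, ← Finset.mul_sum, ← Finset.mul_sum]
      _ ≤ (2 * K) * z t := by
          have := sum_posPart_lap_nonpos G (fun y => w y t)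
          linarith
  -- Gronwall via the exponentially weighted function
  set g : ℝ → ℝ := fun t => z t * Real.exp (-(2 * K) * t) with hg
  have hgderiv : ∀ t ∈ Set.Icc (0:ℝ) T, HasDerivWithinAt g
      (z' t * Real.exp (-(2 * K) * t) + z t * (Real.exp (-(2 * K) * t) * (-(2 * K))))
      (Set.Icc 0 T) t := by
    intro t ht
    have hexp : HasDerivAt (fun s : ℝ => Real.exp (-(2 * K) * s))
        (Real.exp (-(2 * K) * t) * (-(2 * K))) t := by
      have h1 : HasDerivAt (fun s : ℝ => -(2 * K) * s) (-(2 * K)) t := by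
        simpa using (hasDerivAt_id t).const_mul (-(2 * K))
      simpa using h1.exp
    exact (hzderiv t ht).mul hexp.hasDerivWithinAt
  have hgda : ∀ t ∈ Set.Ioo (0:ℝ) T, HasDerivAt g
      (z' t * Real.exp (-(2 * K) * t) + z t * (Real.exp (-(2 * K) * t) * (-(2 * K)))) t := by
    intro t ht
    exact (hgderiv t (Set.Ioo_subset_Icc_self ht)).hasDerivAt (Icc_mem_nhds ht.1 ht.2)
  have hganti : AntitoneOn g (Set.Icc 0 T) := by
    apply antitoneOn_of_deriv_nonpos (convex_Icc 0 T)
    · exact fun t ht => ((hgderiv t ht).continuousWithinAt)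
    · rw [interior_Icc]
      exact fun t ht => ((hgda t ht).differentiableAt.differentiableWithinAt)
    · rw [interior_Icc]
      intro t ht
      have htIcc : t ∈ Set.Icc (0:ℝ) T := Set.Ioo_subset_Icc_self ht
      rw [(hgda t ht).deriv]
      have he := Real.exp_pos (-(2 * K) * t)
      have := hdiffineq t htIcc
      nlinarith
  have hzle : ∀ t ∈ Set.Icc (0:ℝ) T, z t ≤ 0 := by
    intro t ht
    have h1 : g t ≤ g 0 := hganti (Set.left_mem_Icc.2 hT.le) ht ht.1
    have h2 : g 0 = 0 := by simp [hg, hz0]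
    have he := Real.exp_pos (-(2 * K) * t)
    rw [h2] at h1
    simp only [hg] at h1
    nlinarith
  -- conclusion
  intro x t ht
  have hz_eq : z t = 0 := le_antisymm (hzle t ht) (hznn t)
  have hterm_le : G.mu x * (max (w x t) 0)^2 ≤ 0 := by
    calc G.mu x * (max (w x t) 0)^2
        ≤ z t := Finset.single_le_sum (f := fun y => G.mu y * (max (w y t) 0)^2)
          (fun y _ => mul_nonneg (G.mu_pos y).le (sq_nonneg _)) (Finset.mem_univ x)
      _ = 0 := hz_eq
  have hsq : (max (w x t) 0)^2 = 0 := by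
    have h1 : 0 ≤ (max (w x t) 0)^2 := sq_nonneg _
    nlinarith [G.mu_pos x]
  have hmax : max (w x t) 0 = 0 := by
    have := sq_eq_zero_iff.mp hsq
    exact this
  have : w x t ≤ 0 := by
    have := le_max_left (w x t) 0
    rw [hmax] at this
    exact this
  simp only [hwdef] at this
  linarith
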